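/- Let κ be an infinite cardinal and let G be a completely metrizable topological group of weight ≤ κ. If for every ordinal γ < κ⁺ there exists a set S_γ ⊆ G of Cantor–Bendixson rank ≥ γ generating a free abelian subgroup with S_γ as a free basis, then G has a perfectly generated free abelian subgroup, i.e. there exists a perfect set P ⊆ G generating a free abelian subgroup with P as a free basis. -/

import Mathlib

open Set Filter Cardinal FirstOrder

universe u v

/-- A topological space is completely metrizable if its topology is induced by a complete metric. -/
def CompletelyMetrizable (Y : Type*) [t : TopologicalSpace Y] : Prop :=
  ∃ m : MetricSpace Y, m.toUniformSpace.toTopologicalSpace = t ∧ @CompleteSpace Y m.toUniformSpace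

/-- The weight of a topological space: the least cardinality of a topological basis. -/
noncomputable def topWeight (X : Type u) [TopologicalSpace X] : Cardinal.{u} :=
  ⨅ B : { B : Set (Set X) // TopologicalSpace.IsTopologicalBasis B }, Cardinal.mk B.1

/-- A set is dense-in-itself if it is nonempty and has no isolated points
(in the subspace topology). -/
def DenseInItselfSet {X : Type*} [TopologicalSpace X] (S : Set X) : Prop :=
  S.Nonempty ∧ ∀ x ∈ S, AccPt x (𝓟 S)

/-- A set is perfect if it is nonempty, completely metrizable in the subspace topology,
and has no isolated points. -/
def IsPerfectSet {X : Type*} [TopologicalSpace X] (P : Set X) : Prop :=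
  P.Nonempty ∧ CompletelyMetrizable P ∧ ∀ x ∈ P, AccPt x (𝓟 P)

/-- The `γ`-th Cantor–Bendixson derivative of a set: iterate the operation of removing
isolated points, taking intersections at limit stages. -/
noncomputable def cbDeriv {X : Type u} [TopologicalSpace X] (A : Set X) (γ : Ordinal.{v}) :
    Set X :=
  Ordinal.limitRecOn γ A (fun _ ih => { x ∈ ih | AccPt x (𝓟 ih) })
    (fun o _ ih => ⋂ (o' : Ordinal.{v}) (h : o' < o), ih o' h)

/-- `S` generates a free abelian subgroup of `G` with `S` as a free basis: any two elements of
the generated subgroup commute and no nontrivial product of powers of pairwise distinct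
elements of `S` is the identity. -/
def IsFreeAbelianBasis {G : Type*} [Group G] (S : Set G) : Prop :=
  (∀ x ∈ Subgroup.closure S, ∀ y ∈ Subgroup.closure S, x * y = y * x) ∧
  ∀ n : ℕ, 1 ≤ n → ∀ s : Fin n → G, (∀ i, s i ∈ S) → Function.Injective s →
    ∀ k : Fin n → ℤ, (∀ i, k i ≠ 0) → (List.ofFn fun i => s i ^ k i).prod ≠ 1

lemma cbDeriv_zero {X : Type u} [TopologicalSpace X] (A : Set X) : cbDeriv A (0 : Ordinal.{v}) = A :=
  Ordinal.limitRecOn_zero _ _ _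

lemma cbDeriv_succ {X : Type u} [TopologicalSpace X] (A : Set X) (γ : Ordinal.{v}) :
    cbDeriv A (Order.succ γ) = { x ∈ cbDeriv A γ | AccPt x (𝓟 (cbDeriv A γ)) } :=
  Ordinal.limitRecOn_succ _ _ _ _

lemma cbDeriv_limit {X : Type u} [TopologicalSpace X] (A : Set X) {γ : Ordinal.{v}}
    (hγ : Order.IsSuccLimit γ) : cbDeriv A γ = ⋂ (o' : Ordinal.{v}) (_ : o' < γ), cbDeriv A o' :=
  Ordinal.limitRecOn_limit _ _ _ _ hγ

lemma cbDeriv_antitone {X : Type u} [TopologicalSpace X] (A : Set X) :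
    ∀ {γ δ : Ordinal.{v}}, γ ≤ δ → cbDeriv A δ ⊆ cbDeriv A γ := by
  intro γ δ
  induction δ using Ordinal.limitRecOn with
  | zero => intro h; rw [nonpos_iff_eq_zero.1 h]
  | add_one o ih =>
    intro h
    rcases eq_or_lt_of_le h with rfl | h'
    · rfl
    · have : γ ≤ o := Order.le_of_lt_succ h'
      refine subset_trans ?_ (ih this)
      rw [Ordinal.add_one_eq_succ, cbDeriv_succ]; exact fun x hx => hx.1
  | limit o ho ih =>
    intro h
    rcases eq_or_lt_of_le h with rfl | h'
    · rfl
    · rw [cbDeriv_limit A ho]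
      exact fun x hx => by
        simp only [Set.mem_iInter] at hx
        exact hx γ h'

lemma cbDeriv_subset {X : Type u} [TopologicalSpace X] (A : Set X) (γ : Ordinal.{v}) :
    cbDeriv A γ ⊆ A := by
  have := cbDeriv_antitone (X := X) A (zero_le : (0 : Ordinal.{v}) ≤ γ)
  rwa [cbDeriv_zero] at this

lemma closure_comm {G : Type*} [Group G] {S : Set G} (h : ∀ x ∈ S, ∀ y ∈ S, x * y = y * x) :
    ∀ x ∈ Subgroup.closure S, ∀ y ∈ Subgroup.closure S, x * y = y * x := by
  intro x hx y hy
  have : ∀ (a b : G) (_ : a ∈ Subgroup.closure S) (_ : b ∈ Subgroup.closure S), Commute a b := by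
    intro a b ha hb
    induction ha, hb using Subgroup.closure_induction₂ with
    | mem x y hx hy => exact h x hx y hy
    | one_left x hx => exact Commute.one_left x
    | one_right x hx => exact Commute.one_right x
    | mul_left x y z hx hy hz h1 h2 => exact h1.mul_left h2
    | mul_right y z x hy hz hx h1 h2 => exact h1.mul_right h2
    | inv_left x y hx hy h1 => exact h1.inv_left
    | inv_right x y hx hy h1 => exact h1.inv_right
  exact this x y hx hy

lemma pigeon {κ : Cardinal.{u}} (hκ : ℵ₀ ≤ κ) {T : Type u} [Nonempty T] (hT : #T ≤ κ)
    (f : Ordinal.{u} → T) :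
    ∃ t : T, ∀ δ < (Order.succ κ).ord, ∃ γ, δ ≤ γ ∧ γ < (Order.succ κ).ord ∧ f γ = t := by
  by_contra hcon
  push_neg at hcon
  choose g hg1 hg2 using hcon
  have hcof : (Order.succ κ).ord.cof = Order.succ κ := (Cardinal.isRegular_succ hκ).cof_eq
  have hsup : iSup g < (Order.succ κ).ord := by
    apply Cardinal.iSup_lt_ord_of_isRegular (Cardinal.isRegular_succ hκ)
    · exact lt_of_le_of_lt hT (Order.lt_succ κ)
    · exact hg1
  have h1 : g (f (iSup g)) ≤ iSup g := Ordinal.le_iSup g _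
  exact hg2 (f (iSup g)) (iSup g) h1 hsup rfl

/-- products over patterns of distinct nodes avoid 1 -/
def LockedFam {G : Type*} [Group G] (c : ℕ) {N : Type} (V : N → Set G) : Prop :=
  ∀ m : ℕ, 1 ≤ m → ∀ t : Fin m → N, Function.Injective t → ∀ k : Fin m → ℤ,
    (∀ i, k i ≠ 0) → (∀ i, (k i).natAbs ≤ c) → ∀ y : Fin m → G, (∀ i, y i ∈ V (t i)) →
    (List.ofFn fun i => y i ^ k i).prod ≠ 1

lemma lockedFam_mono {G : Type*} [Group G] {c : ℕ} {N : Type} {V W : N → Set G}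
    (h : LockedFam c V) (hWV : ∀ t, W t ⊆ V t) : LockedFam c W :=
  fun m hm t ht k hk hkc y hy => h m hm t ht k hk hkc y (fun i => hWV _ (hy i))

lemma box_lemma {G : Type*} [Group G] [TopologicalSpace G] [IsTopologicalGroup G] [T1Space G]
    (c : ℕ) {N : Type} [Fintype N] [DecidableEq N] (z : N → G)
    (hz : LockedFam c (fun t => ({z t} : Set G))) :
    ∃ A : N → Set G, (∀ t, IsOpen (A t)) ∧ (∀ t, z t ∈ A t) ∧ LockedFam c A := by
  classical
  -- pattern type
  set P := Σ m : Fin (Fintype.card N + 1), (Fin (m : ℕ) ↪ N) × (Fin (m : ℕ) → ↥(Finset.Icc (-(c : ℤ)) c)) with hP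
  have : Fintype P := by infer_instance
  -- for each pattern the function
  let F : P → (N → G) → G := fun p w => (List.ofFn fun i => w (p.2.1 i) ^ ((p.2.2 i : ℤ))).prod
  have hFcont : ∀ p, Continuous (F p) := by
    intro p
    have : (fun w : N → G => (List.ofFn fun i => w (p.2.1 i) ^ ((p.2.2 i : ℤ))).prod)
        = fun w : N → G => ((List.finRange (p.1 : ℕ)).map fun i => w (p.2.1 i) ^ ((p.2.2 i : ℤ))).prod := by
      funext w; rw [List.ofFn_eq_map]
    rw [show F p = _ from this]
    exact continuous_list_prod _ fun i _ => ((continuous_apply (p.2.1 i)).zpow _)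
  let Op : P → Set (N → G) := fun p =>
    {w | (1 ≤ (p.1 : ℕ) ∧ ∀ i, (p.2.2 i : ℤ) ≠ 0) → F p w ≠ 1}
  have hOpopen : ∀ p, IsOpen (Op p) := by
    intro p
    by_cases hc : 1 ≤ (p.1 : ℕ) ∧ ∀ i, (p.2.2 i : ℤ) ≠ 0
    · have : Op p = F p ⁻¹' ({1}ᶜ) := by
        ext w; simp [Op, hc]
      rw [this]
      exact (isOpen_compl_singleton).preimage (hFcont p)
    · have : Op p = Set.univ := by
        ext w; simp only [Op, mem_setOf_eq, mem_univ, iff_true]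
        exact fun hcc => absurd hcc hc
      rw [this]; exact isOpen_univ
  have hzO : z ∈ ⋂ p, Op p := by
    refine mem_iInter.2 fun p => ?_
    intro ⟨h1, h2⟩
    exact hz (p.1 : ℕ) h1 p.2.1 p.2.1.injective (fun i => (p.2.2 i : ℤ)) h2
      (fun i => by
        have h2 := (p.2.2 i).2
        rw [Finset.mem_Icc] at h2
        show ((p.2.2 i : ℤ)).natAbs ≤ c
        omega)
      (fun i => z (p.2.1 i)) (fun i => rfl)
  have hOopen : IsOpen (⋂ p, Op p) := isOpen_iInter_of_finite hOpopen
  obtain ⟨I, u, hIu, hpi⟩ := isOpen_pi_iff.1 hOopen z hzO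
  set A : N → Set G := fun t => if t ∈ I then u t else Set.univ with hA
  have hAsub : ∀ a ∈ I, A a ⊆ u a := by intro a ha; simp [A, ha]
  refine ⟨A, ?_, ?_, ?_⟩
  · intro t
    by_cases ht : t ∈ I
    · simpa [A, ht] using (hIu t ht).1
    · simp [A, ht]
  · intro t
    by_cases ht : t ∈ I
    · simpa [A, ht] using (hIu t ht).2
    · simp [A, ht]
  · intro m hm t htinj k hk hkc y hy
    -- extend y to a full function
    let w : N → G := fun s => if h : ∃ i, t i = s then y h.choose else z s
    have hwt : ∀ i, w (t i) = y i := by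
      intro i
      have h : ∃ j, t j = t i := ⟨i, rfl⟩
      have : h.choose = i := htinj h.choose_spec
      simp only [w, dif_pos h, this]
    have hwmem : w ∈ (I : Set N).pi u := by
      intro a ha
      by_cases h : ∃ i, t i = a
      · have := hy h.choose
        rw [h.choose_spec] at this
        simp only [w, dif_pos h]
        exact hAsub a ha this
      · simp only [w, dif_neg h]
        exact (hIu a ha).2
    have hwO := hpi hwmem
    -- build the pattern
    have hmle : m ≤ Fintype.card N := Fintype.card_fin m ▸ Fintype.card_le_of_injective t htinj
    have hmlt : m < Fintype.card N + 1 := Nat.lt_succ_of_le hmle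
    let p : P := ⟨⟨m, hmlt⟩, ⟨t, htinj⟩, fun i => ⟨k i, by
      rw [Finset.mem_Icc]
      have := hkc i; omega⟩⟩
    have := mem_iInter.1 hwO p ⟨hm, fun i => hk i⟩
    have heq : F p w = (List.ofFn fun i => y i ^ k i).prod := by
      show (List.ofFn fun i : Fin m => w (t i) ^ k i).prod = _
      simp only [hwt]
    rw [heq] at this
    exact this

/-- A family of open sets indexed by nodes supports free sets of arbitrarily high rank. -/
def GoodFam {G : Type u} [Group G] [TopologicalSpace G] (o : Ordinal.{u}) {n : ℕ}
    (U : (Fin n → Bool) → Set G) : Prop :=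
  ∀ γ < o, ∃ K : Set G, IsFreeAbelianBasis K ∧ ∀ s, ∃ x, x ∈ cbDeriv K γ ∧ x ∈ U s

lemma step_lemma {κ : Cardinal.{u}} (hκ : ℵ₀ ≤ κ) {G : Type u} [Group G] [MetricSpace G]
    [IsTopologicalGroup G] {B : Set (Set G)} (hB : TopologicalSpace.IsTopologicalBasis B)
    (hBκ : #B ≤ κ) {n : ℕ} {U : (Fin n → Bool) → Set G}
    (hUopen : ∀ s, IsOpen (U s)) (hUdisj : ∀ s t, s ≠ t → Disjoint (U s) (U t))
    (hUgood : GoodFam (Order.succ κ).ord U) {ε : ℝ} (hε : 0 < ε) :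
    ∃ V : (Fin (n+1) → Bool) → Set G,
      (∀ t, IsOpen (V t)) ∧ (∀ t₁ t₂, t₁ ≠ t₂ → Disjoint (V t₁) (V t₂)) ∧
      GoodFam (Order.succ κ).ord V ∧
      (∀ t, closure (V t) ⊆ U (Fin.init t)) ∧
      (∀ t, ∀ x ∈ V t, ∀ y ∈ V t, dist x y ≤ ε) ∧
      LockedFam (n+1) V := by
  classical
  set o : Ordinal.{u} := (Order.succ κ).ord with ho
  have holim : Order.IsSuccLimit o := Cardinal.isSuccLimit_ord (hκ.trans (Order.le_succ κ))
  -- candidate predicate on tuples of basic sets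
  set Cand : ((Fin (n+1) → Bool) → ↥B) → Prop := fun b =>
    (∀ t₁ t₂, t₁ ≠ t₂ → Disjoint ((b t₁ : Set G)) ((b t₂ : Set G))) ∧
    (∀ t, closure ((b t : Set G)) ⊆ U (Fin.init t)) ∧
    (∀ t, ∀ x ∈ (b t : Set G), ∀ y ∈ (b t : Set G), dist x y ≤ ε) ∧
    LockedFam (n+1) (fun t => ((b t : Set G))) with hCand
  set Wit : Ordinal.{u} → ((Fin (n+1) → Bool) → ↥B) → Prop := fun γ b =>
    ∃ K : Set G, IsFreeAbelianBasis K ∧ ∀ t, ∃ x, x ∈ cbDeriv K γ ∧ x ∈ (b t : Set G)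
    with hWit
  -- main claim: for each γ < o there is a candidate with witnesses of rank γ
  have claim : ∀ γ < o, ∃ b, Cand b ∧ Wit γ b := by
    intro γ hγ
    obtain ⟨K, hKfree, hKw⟩ := hUgood (Order.succ γ) (holim.succ_lt hγ)
    choose x hx1 hx2 using hKw
    -- split each point
    have hsplit : ∀ s, ∃ y, y ∈ U s ∩ cbDeriv K γ ∧ y ≠ x s := by
      intro s
      have h1 := hx1 s
      rw [cbDeriv_succ] at h1
      exact accPt_iff_nhds.1 h1.2 (U s) ((hUopen s).mem_nhds (hx2 s))
    choose y hy1 hyne using hsplit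
    set z : (Fin (n+1) → Bool) → G := fun t =>
      if t (Fin.last n) then y (Fin.init t) else x (Fin.init t) with hz
    have hzD : ∀ t, z t ∈ cbDeriv K γ := by
      intro t
      by_cases hb : t (Fin.last n)
      · simp only [z, if_pos hb]; exact (Set.mem_of_mem_inter_right (hy1 _))
      · simp only [z, if_neg hb]
        have h1 := hx1 (Fin.init t)
        rw [cbDeriv_succ] at h1
        exact h1.1
    have hzU : ∀ t, z t ∈ U (Fin.init t) := by
      intro t
      by_cases hb : t (Fin.last n)
      · simp only [z, if_pos hb]; exact (Set.mem_of_mem_inter_left (hy1 _))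
      · simp only [z, if_neg hb]; exact hx2 _
    have hzK : ∀ t, z t ∈ K := fun t => cbDeriv_subset K γ (hzD t)
    have hzinj : Function.Injective z := by
      intro t₁ t₂ he
      by_contra hne
      by_cases hpar : Fin.init t₁ = Fin.init t₂
      · have hlast : t₁ (Fin.last n) ≠ t₂ (Fin.last n) := by
          intro hl
          apply hne
          have e1 := Fin.snoc_init_self t₁
          have e2 := Fin.snoc_init_self t₂
          rw [← e1, ← e2, hpar, hl]
        rcases Bool.eq_false_or_eq_true (t₁ (Fin.last n)) with h1 | h1 <;>
          rcases Bool.eq_false_or_eq_true (t₂ (Fin.last n)) with h2 | h2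
        · exact hlast (h1.trans h2.symm)
        · simp only [z, h1, h2, Bool.false_eq_true, if_false, if_true] at he
          rw [hpar] at he
          exact hyne _ he
        · simp only [z, h1, h2, Bool.false_eq_true, if_false, if_true] at he
          rw [hpar] at he
          exact hyne _ he.symm
        · exact hlast (h1.trans h2.symm)
      · have d := hUdisj _ _ hpar
        have m1 := hzU t₁
        have m2 := hzU t₂
        rw [he] at m1
        exact (Set.disjoint_left.1 d m1) m2
    -- locked at the witness points
    have hzlock : LockedFam (n+1) (fun t => ({z t} : Set G)) := by
      intro m hm t ht k hk hkc yy hyy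
      have hyz : yy = fun i => z (t i) := by
        funext i; exact hyy i
      rw [hyz]
      exact hKfree.2 m hm (fun i => z (t i)) (fun i => hzK _)
        (hzinj.comp ht) k hk
    obtain ⟨A, hAopen, hAz, hAlock⟩ := box_lemma (n+1) z hzlock
    -- minimum distance between witness points
    have hzne : ((fun _ => false : Fin (n+1) → Bool)) ≠ (fun _ => true) := by
      intro hcc
      have := congrFun hcc (Fin.last n)
      simp at this
    obtain ⟨d, hd, hdle⟩ : ∃ d > 0, ∀ t₁ t₂, t₁ ≠ t₂ → d ≤ dist (z t₁) (z t₂) := by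
      set F : Finset ℝ := ((Finset.univ.filter
        (fun p : ((Fin (n+1) → Bool)) × ((Fin (n+1) → Bool)) => p.1 ≠ p.2)).image
        (fun p => dist (z p.1) (z p.2))) with hF
      have hFne : F.Nonempty := by
        refine ⟨dist (z (fun _ => false)) (z (fun _ => true)), ?_⟩
        simp only [F, Finset.mem_image]
        refine ⟨⟨fun _ => false, fun _ => true⟩, ?_, rfl⟩
        simp only [Finset.mem_filter, Finset.mem_univ, true_and]
        exact hzne
      refine ⟨F.min' hFne, ?_, ?_⟩
      · have := F.min'_mem hFne
        simp only [F, Finset.mem_image, Finset.mem_filter] at this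
        obtain ⟨p, hp, he⟩ := this
        rw [← he]
        exact dist_pos.2 fun hc => hp.2 (hzinj hc)
      · intro t₁ t₂ hne
        apply F.min'_le
        simp only [F, Finset.mem_image, Finset.mem_filter]
        exact ⟨⟨t₁, t₂⟩, ⟨Finset.mem_univ _, hne⟩, rfl⟩
    -- radius into the parent
    have hρ : ∀ t, ∃ ρ > 0, Metric.ball (z t) ρ ⊆ U (Fin.init t) :=
      fun t => Metric.isOpen_iff.1 (hUopen _) _ (hzU t)
    choose ρ hρpos hρsub using hρ
    -- choose basic sets
    have hbas : ∀ t, ∃ v ∈ B, z t ∈ v ∧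
        v ⊆ A t ∩ Metric.ball (z t) (min (ρ t / 2) (min (ε / 2) (d / 3))) := by
      intro t
      apply hB.exists_subset_of_mem_open
      · exact ⟨hAz t, by
          simp only [Metric.mem_ball, dist_self]
          exact lt_min (by linarith [hρpos t]) (lt_min (by linarith) (by linarith))⟩
      · exact (hAopen t).inter Metric.isOpen_ball
    choose v hvB hvz hvsub using hbas
    refine ⟨fun t => ⟨v t, hvB t⟩, ⟨?_, ?_, ?_, ?_⟩, K, hKfree, fun t => ⟨z t, hzD t, hvz t⟩⟩
    · -- disjoint
      intro t₁ t₂ hne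
      rw [Set.disjoint_left]
      intro a ha1 ha2
      have h1 : dist a (z t₁) < d / 3 :=
        lt_of_lt_of_le ((Metric.mem_ball).1 ((hvsub t₁ ha1).2))
          ((min_le_right _ _).trans (min_le_right _ _))
      have h2 : dist a (z t₂) < d / 3 :=
        lt_of_lt_of_le ((Metric.mem_ball).1 ((hvsub t₂ ha2).2))
          ((min_le_right _ _).trans (min_le_right _ _))
      have := hdle t₁ t₂ hne
      have := dist_triangle (z t₁) a (z t₂)
      rw [dist_comm (z t₁) a] at this
      linarith
    · -- closure into parent
      intro t
      have h1 : v t ⊆ Metric.ball (z t) (ρ t / 2) :=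
        fun a ha => lt_of_lt_of_le ((Metric.mem_ball).1 ((hvsub t ha).2)) (min_le_left _ _)
      calc closure (v t) ⊆ closure (Metric.ball (z t) (ρ t / 2)) := closure_mono h1
        _ ⊆ Metric.closedBall (z t) (ρ t / 2) := Metric.closure_ball_subset_closedBall
        _ ⊆ Metric.ball (z t) (ρ t) := Metric.closedBall_subset_ball (by linarith [hρpos t])
        _ ⊆ U (Fin.init t) := hρsub t
    · -- diameter
      intro t a ha b hb
      have h1 : dist a (z t) < ε / 2 :=
        lt_of_lt_of_le ((Metric.mem_ball).1 ((hvsub t ha).2))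
          ((min_le_right _ _).trans (min_le_left _ _))
      have h2 : dist b (z t) < ε / 2 :=
        lt_of_lt_of_le ((Metric.mem_ball).1 ((hvsub t hb).2))
          ((min_le_right _ _).trans (min_le_left _ _))
      have := dist_triangle a (z t) b
      rw [dist_comm (z t) b] at this
      linarith
    · -- locked
      exact lockedFam_mono hAlock (fun t a ha => (hvsub t ha).1)
  -- pigeonhole
  have hBnone : Nonempty ↥B := by
    obtain ⟨v, hvB, _, _⟩ := hB.exists_subset_of_mem_open (Set.mem_univ (1 : G)) isOpen_univ
    exact ⟨⟨v, hvB⟩⟩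
  have hTcard : #((Fin (n+1) → Bool) → ↥B) ≤ κ := by
    rw [Cardinal.mk_arrow]
    have h1 : Cardinal.lift.{0} #↥B ≤ κ := by
      simpa using hBκ
    have h2 : Cardinal.lift.{u} #(Fin (n+1) → Bool) = ((2 ^ (n+1) : ℕ) : Cardinal.{u}) := by
      rw [Cardinal.mk_fintype]
      simp only [Fintype.card_fun, Fintype.card_bool, Fintype.card_fin, Cardinal.lift_natCast]
    calc Cardinal.lift.{0} #↥B ^ Cardinal.lift.{u} #(Fin (n+1) → Bool)
        ≤ κ ^ Cardinal.lift.{u} #(Fin (n+1) → Bool) :=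
          Cardinal.power_le_power_right h1
      _ = κ ^ ((2 ^ (n+1) : ℕ) : Cardinal.{u}) := by rw [h2]
      _ ≤ κ := by
          rw [Cardinal.power_natCast]
          exact Cardinal.power_nat_le hκ
  set f : Ordinal.{u} → ((Fin (n+1) → Bool) → ↥B) := fun γ =>
    if hγ : γ < o then (claim γ hγ).choose else Classical.arbitrary _ with hf
  obtain ⟨b, hb⟩ := pigeon hκ hTcard f
  have hCb : Cand b := by
    obtain ⟨γ, _, hγo, hfγ⟩ := hb 0 holim.pos
    rw [hf] at hfγ
    simp only [dif_pos (show γ < o from hγo)] at hfγ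
    rw [← hfγ]
    exact (claim γ hγo).choose_spec.1
  refine ⟨fun t => ((b t : Set G)), fun t => hB.isOpen (b t).2, hCb.1, ?_, hCb.2.1, hCb.2.2.1,
    hCb.2.2.2⟩
  -- goodness
  intro δ hδ
  obtain ⟨γ, hδγ, hγo, hfγ⟩ := hb δ hδ
  rw [hf] at hfγ
  simp only [dif_pos (show γ < o from hγo)] at hfγ
  obtain ⟨K, hKfree, hKw⟩ : Wit γ b := by
    rw [← hfγ]
    exact (claim γ hγo).choose_spec.2
  exact ⟨K, hKfree, fun s => by
    obtain ⟨xx, hx1, hx2⟩ := hKw s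
    exact ⟨xx, cbDeriv_antitone K hδγ hx1, hx2⟩⟩

/-- invariant carried along the recursion -/
def InvFam {G : Type u} [Group G] [TopologicalSpace G] (o : Ordinal.{u}) {n : ℕ}
    (U : (Fin n → Bool) → Set G) : Prop :=
  (∀ s, IsOpen (U s)) ∧ (∀ s t, s ≠ t → Disjoint (U s) (U t)) ∧ GoodFam o U

def RelFam {G : Type u} [Group G] [MetricSpace G] (n : ℕ) (U : (Fin n → Bool) → Set G)
    (V : (Fin (n+1) → Bool) → Set G) : Prop :=
  (∀ t, closure (V t) ⊆ U (Fin.init t)) ∧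
  (∀ t, ∀ x ∈ V t, ∀ y ∈ V t, dist x y ≤ (1/2 : ℝ)^n) ∧ LockedFam (n+1) V

def resF (n : ℕ) (σ : ℕ → Bool) : Fin n → Bool := fun i => σ i

lemma resF_init (n : ℕ) (σ : ℕ → Bool) : Fin.init (resF (n+1) σ) = resF n σ := rfl

lemma resF_ne {n : ℕ} {σ τ : ℕ → Bool} {i : ℕ} (hi : i < n) (hne : σ i ≠ τ i) :
    resF n σ ≠ resF n τ := fun hcc => hne (congrFun hcc ⟨i, hi⟩)

theorem aux_main {κ : Cardinal.{u}} (hκ : ℵ₀ ≤ κ) {G : Type u} [Group G] [MetricSpace G]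
    [CompleteSpace G] [IsTopologicalGroup G] {B : Set (Set G)}
    (hB : TopologicalSpace.IsTopologicalBasis B) (hBκ : #B ≤ κ)
    (h : ∀ γ : Ordinal.{u}, γ < (Order.succ κ).ord → ∃ S : Set G,
      (∀ γ' : Ordinal.{u}, γ' < γ → (cbDeriv S γ').Nonempty) ∧ IsFreeAbelianBasis S) :
    ∃ P : Set G, P.Nonempty ∧ IsClosed P ∧ (∀ x ∈ P, AccPt x (𝓟 P)) ∧ IsFreeAbelianBasis P := by
  classical
  set o : Ordinal.{u} := (Order.succ κ).ord with ho
  have holim : Order.IsSuccLimit o := Cardinal.isSuccLimit_ord (hκ.trans (Order.le_succ κ))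
  -- root
  have hroot : InvFam o (fun _ : Fin 0 → Bool => (Set.univ : Set G)) := by
    refine ⟨fun _ => isOpen_univ, fun s t hst => absurd (funext fun i => i.elim0) hst, ?_⟩
    intro γ hγ
    obtain ⟨S, hS1, hS2⟩ := h (Order.succ γ) (holim.succ_lt hγ)
    obtain ⟨x, hx⟩ := hS1 γ (Order.lt_succ γ)
    exact ⟨S, hS2, fun s => ⟨x, hx, Set.mem_univ x⟩⟩
  -- the step
  have hstep : ∀ n (U : (Fin n → Bool) → Set G), InvFam o U →
      ∃ V, InvFam o V ∧ RelFam n U V := by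
    intro n U hU
    obtain ⟨V, h1, h2, h3, h4, h5, h6⟩ :=
      step_lemma hκ hB hBκ hU.1 hU.2.1 hU.2.2 (pow_pos (by norm_num : (0:ℝ) < 1/2) n)
    exact ⟨V, ⟨h1, h2, h3⟩, ⟨h4, h5, h6⟩⟩
  -- the recursion
  let T : ℕ → Type u := fun n => {U : (Fin n → Bool) → Set G // InvFam o U}
  let Useq : ∀ n, T n := fun n => Nat.rec (⟨_, hroot⟩ : T 0)
    (fun n p => ⟨(hstep n p.1 p.2).choose, (hstep n p.1 p.2).choose_spec.1⟩) n
  let U : ∀ n, (Fin n → Bool) → Set G := fun n => (Useq n).1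
  have hInv : ∀ n, InvFam o (U n) := fun n => (Useq n).2
  have hrel : ∀ n, RelFam n (U n) (U (n+1)) :=
    fun n => (hstep n (U n) (hInv n)).choose_spec.2
  -- nested chains along branches
  have hchain : ∀ (σ : ℕ → Bool) (n : ℕ), U (n+1) (resF (n+1) σ) ⊆ U n (resF n σ) := by
    intro σ n
    have := (hrel n).1 (resF (n+1) σ)
    rw [resF_init] at this
    exact subset_closure.trans this
  have hnested : ∀ (σ : ℕ → Bool) (n m : ℕ), n ≤ m → U m (resF m σ) ⊆ U n (resF n σ) := by
    intro σ n m hnm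
    induction hnm with
    | refl => exact subset_rfl
    | @step m' hm' ih => exact (hchain σ m').trans ih
  -- witness points
  have hwit : ∀ n, ∃ K : Set G, IsFreeAbelianBasis K ∧
      ∀ s : Fin n → Bool, ∃ x, x ∈ K ∧ x ∈ U n s := by
    intro n
    obtain ⟨K, hK1, hK2⟩ := (hInv n).2.2 0 holim.pos
    refine ⟨K, hK1, fun s => ?_⟩
    obtain ⟨x, hx1, hx2⟩ := hK2 s
    rw [cbDeriv_zero] at hx1
    exact ⟨x, hx1, hx2⟩
  choose K hKfree hKw using hwit
  choose x hxK hxU using hKw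
  -- Cauchy sequences along branches
  have hmemU : ∀ (σ : ℕ → Bool) (n : ℕ), x n (resF n σ) ∈ U n (resF n σ) := fun σ n => hxU n _
  have hbound : ∀ (σ : ℕ → Bool) (n m₁ m₂ : ℕ), n+1 ≤ m₁ → n+1 ≤ m₂ →
      dist (x m₁ (resF m₁ σ)) (x m₂ (resF m₂ σ)) ≤ (1/2:ℝ)^n := by
    intro σ n m₁ m₂ h1 h2
    exact (hrel n).2.1 (resF (n+1) σ) _ (hnested σ (n+1) m₁ h1 (hmemU σ m₁))
      _ (hnested σ (n+1) m₂ h2 (hmemU σ m₂))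
  have hcauchy : ∀ σ : ℕ → Bool, CauchySeq (fun n => x n (resF n σ)) := by
    intro σ
    rw [Metric.cauchySeq_iff']
    intro ε hε
    obtain ⟨j, hj⟩ := exists_pow_lt_of_lt_one hε (by norm_num : (1/2:ℝ) < 1)
    refine ⟨j+1, fun n hn => ?_⟩
    exact lt_of_le_of_lt (hbound σ j n (j+1) hn le_rfl) hj
  choose p hp using fun σ => cauchySeq_tendsto_of_complete (hcauchy σ)
  -- limit points are in all the open sets along their branch
  have hpU : ∀ (σ : ℕ → Bool) (n : ℕ), p σ ∈ U n (resF n σ) := by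
    intro σ n
    have hcl : p σ ∈ closure (U (n+1) (resF (n+1) σ)) := by
      refine mem_closure_of_tendsto (hp σ) ?_
      filter_upwards [eventually_ge_atTop (n+1)] with m hm
      exact hnested σ (n+1) m hm (hmemU σ m)
    have := (hrel n).1 (resF (n+1) σ)
    rw [resF_init] at this
    exact this hcl
  -- injectivity
  have hpinj : Function.Injective p := by
    intro σ τ he
    by_contra hne
    obtain ⟨i, hi⟩ : ∃ i, σ i ≠ τ i := by
      by_contra hcc
      push_neg at hcc
      exact hne (funext hcc)
    have hres : resF (i+1) σ ≠ resF (i+1) τ := resF_ne (Nat.lt_succ_self i) hi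
    have d := (hInv (i+1)).2.1 _ _ hres
    have m1 := hpU σ (i+1)
    rw [he] at m1
    exact Set.disjoint_left.1 d m1 (hpU τ (i+1))
  -- continuity of p
  have hpcont : Continuous p := by
    rw [continuous_iff_continuousAt]
    intro σ
    rw [ContinuousAt, Metric.tendsto_nhds]
    intro ε hε
    obtain ⟨j, hj⟩ := exists_pow_lt_of_lt_one hε (by norm_num : (1/2:ℝ) < 1)
    have hWopen : IsOpen {τ : ℕ → Bool | resF (j+1) τ = resF (j+1) σ} := by
      have : {τ : ℕ → Bool | resF (j+1) τ = resF (j+1) σ}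
          = ⋂ i : Fin (j+1), (fun τ : ℕ → Bool => τ i) ⁻¹' {σ (i : ℕ)} := by
        ext τ
        simp only [Set.mem_setOf_eq, Set.mem_iInter, Set.mem_preimage, Set.mem_singleton_iff]
        constructor
        · intro hcc i; exact congrFun hcc i
        · intro hcc; funext i; exact hcc i
      rw [this]
      exact isOpen_iInter_of_finite fun i => (continuous_apply (i : ℕ)).isOpen_preimage _ (isOpen_discrete _)
    filter_upwards [hWopen.mem_nhds (by simp : σ ∈ _)] with τ hτ
    have h1 : p τ ∈ U (j+1) (resF (j+1) σ) := by
      have := hpU τ (j+1)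
      rwa [hτ] at this
    exact lt_of_le_of_lt ((hrel j).2.1 (resF (j+1) σ) _ h1 _ (hpU σ (j+1))) hj
  set P : Set G := Set.range p with hP
  have hPclosed : IsClosed P := (isCompact_range hpcont).isClosed
  refine ⟨P, Set.range_nonempty _, hPclosed, ?_, ?_, ?_⟩
  · -- no isolated points
    rintro _ ⟨σ, rfl⟩
    rw [accPt_iff_nhds]
    intro V hV
    obtain ⟨ε, hε, hball⟩ := Metric.mem_nhds_iff.1 hV
    obtain ⟨j, hj⟩ := exists_pow_lt_of_lt_one hε (by norm_num : (1/2:ℝ) < 1)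
    set τ : ℕ → Bool := fun m => if m = j+1 then !(σ (j+1)) else σ m with hτ
    have hτσ : τ ≠ σ := by
      intro hcc
      have := congrFun hcc (j+1)
      simp [τ] at this
    have hres : resF (j+1) τ = resF (j+1) σ := by
      funext i
      have hilt : (i : ℕ) < j + 1 := i.2
      simp only [resF, τ]
      rw [if_neg (by omega)]
    refine ⟨p τ, ⟨?_, ⟨τ, rfl⟩⟩, fun hcc => hτσ (hpinj hcc)⟩
    apply hball
    have h1 : p τ ∈ U (j+1) (resF (j+1) σ) := by
      have := hpU τ (j+1); rwa [hres] at this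
    exact lt_of_le_of_lt ((hrel j).2.1 (resF (j+1) σ) _ h1 _ (hpU σ (j+1))) hj
  · -- commuting
    apply closure_comm
    rintro _ ⟨σ, rfl⟩ _ ⟨τ, rfl⟩
    have h1 : Filter.Tendsto (fun n => x n (resF n σ) * x n (resF n τ)) atTop
        (nhds (p σ * p τ)) := (hp σ).mul (hp τ)
    have h2 : Filter.Tendsto (fun n => x n (resF n σ) * x n (resF n τ)) atTop
        (nhds (p τ * p σ)) := by
      have h3 : (fun n => x n (resF n σ) * x n (resF n τ))
          = fun n => x n (resF n τ) * x n (resF n σ) := by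
        funext n
        exact (hKfree n).1 _ (Subgroup.subset_closure (hxK n _)) _
          (Subgroup.subset_closure (hxK n _))
      rw [h3]
      exact (hp τ).mul (hp σ)
    exact tendsto_nhds_unique h1 h2
  · -- free products
    intro m hm s hsP hsinj k hk
    have hex : ∀ i, ∃ σ, p σ = s i := fun i => hsP i
    choose σ hσ using hex
    have hσinj : Function.Injective σ := by
      intro i j hij
      by_contra hne
      exact (hsinj.ne hne) (by rw [← hσ i, ← hσ j, hij])
    -- separation level
    have hsep : ∀ q : Fin m × Fin m, ∃ d : ℕ, q.1 ≠ q.2 → σ q.1 d ≠ σ q.2 d := by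
      intro q
      by_cases hq : q.1 = q.2
      · exact ⟨0, fun hcc => absurd hq hcc⟩
      · have : σ q.1 ≠ σ q.2 := fun hcc => hq (hσinj hcc)
        obtain ⟨d, hd⟩ : ∃ d, σ q.1 d ≠ σ q.2 d := by
          by_contra hcc
          push_neg at hcc
          exact this (funext hcc)
        exact ⟨d, fun _ => hd⟩
    choose dd hdd using hsep
    set M : ℕ := max (Finset.univ.sup fun q : Fin m × Fin m => dd q + 1)
      (Finset.univ.sup fun i : Fin m => (k i).natAbs) with hM
    have hlock : LockedFam (M+1) (U (M+1)) := (hrel M).2.2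
    refine hlock m hm (fun i => resF (M+1) (σ i)) ?_ k hk ?_ s ?_
    · -- injective at level M+1
      intro i j hij
      by_contra hne
      have hd := hdd (i, j) hne
      have hlt : dd (i, j) < M + 1 := by
        have : dd (i, j) + 1 ≤ Finset.univ.sup fun q : Fin m × Fin m => dd q + 1 :=
          Finset.le_sup (f := fun q : Fin m × Fin m => dd q + 1) (Finset.mem_univ (i, j))
        omega
      exact resF_ne hlt hd hij
    · -- exponent bounds
      intro i
      have : (k i).natAbs ≤ Finset.univ.sup fun i : Fin m => (k i).natAbs :=
        Finset.le_sup (f := fun i : Fin m => (k i).natAbs) (Finset.mem_univ i)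
      omega
    · -- membership
      intro i
      rw [← hσ i]
      exact hpU (σ i) (M+1)

theorem statement8 (κ : Cardinal.{u}) (hκ : ℵ₀ ≤ κ)
    {G : Type u} [Group G] [TopologicalSpace G] [IsTopologicalGroup G]
    (hG : CompletelyMetrizable G) (hw : topWeight G ≤ κ)
    (h : ∀ γ : Ordinal.{u}, γ < (Order.succ κ).ord → ∃ S : Set G,
      (∀ γ' : Ordinal.{u}, γ' < γ → (cbDeriv S γ').Nonempty) ∧ IsFreeAbelianBasis S) :
    ∃ P : Set G, IsPerfectSet P ∧ IsFreeAbelianBasis P := by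
  obtain ⟨m, hm, hc⟩ := hG
  subst hm
  letI : MetricSpace G := m
  letI : CompleteSpace G := hc
  -- extract a basis of size ≤ κ
  have hne : Nonempty { B : Set (Set G) // TopologicalSpace.IsTopologicalBasis B } :=
    ⟨⟨{U | IsOpen U}, TopologicalSpace.isTopologicalBasis_opens⟩⟩
  have hmem : topWeight G ∈ Set.range
      (fun B : { B : Set (Set G) // TopologicalSpace.IsTopologicalBasis B } => #B.1) := by
    rw [topWeight, iInf]
    exact csInf_mem (Set.range_nonempty _)
  obtain ⟨⟨B, hB⟩, hBeq⟩ := hmem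
  have hBκ : #B ≤ κ := by
    rw [show (#↑B : Cardinal.{u}) = topWeight G from hBeq]; exact hw
  obtain ⟨P, hPne, hPclosed, hPacc, hPfree⟩ := aux_main hκ hB hBκ h
  refine ⟨P, ⟨hPne, ?_, hPacc⟩, hPfree⟩
  -- completely metrizable subspace
  haveI : CompleteSpace P := hPclosed.completeSpace_coe
  exact ⟨Subtype.metricSpace, rfl, ‹CompleteSpace P›⟩
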